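/- arXiv:2309.16443 — 3 statements merged into one kernel-verified Lean document; each statement's English description precedes it below -/
import Mathlib

section
/- Let Y be a discrete random variable such that for all nonnegative integers y ≥ θ, P(Y = y) = (φ/(1+φ)) [(θ/y)^α − (θ/(y+1))^α], with φ > 0, θ > 0, α > 0. If α ≤ n (for a positive integer n), then the n-th moment E(Y^n) = ∑_y y^n P(Y=y) is infinite. -/
set_option maxHeartbeats 1000000

/-- If α ≤ n, the n-th moment of a discrete composite distribution with
Pareto(α,θ) tail is infinite (the defining series is not summable). -/
theorem nth_moment_infinite_of_le
    (φ θ α : ℝ) (hφ : 0 < φ) (hθ : 0 < θ) (hα : 0 < α)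
    (p : ℕ → ℝ) (hnonneg : ∀ y : ℕ, 0 ≤ p y)
    (htail : ∀ y : ℕ, θ ≤ (y : ℝ) →
      p y = (φ / (1 + φ)) * ((θ / y) ^ α - (θ / ((y : ℝ) + 1)) ^ α))
    (n : ℕ) (hn : 1 ≤ n) (hαn : α ≤ (n : ℝ)) :
    ¬ Summable (fun y : ℕ => (y : ℝ) ^ n * p y) := by
  intro hsum
  set C : ℝ := φ / (1 + φ) with hC
  have hCpos : 0 < C := div_pos hφ (by linarith)
  set c : ℝ := C * θ ^ α * min α 1 with hc
  have hcpos : 0 < c := by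
    apply mul_pos (mul_pos hCpos (Real.rpow_pos_of_pos hθ α))
    exact lt_min hα one_pos
  set m : ℕ := ⌈θ⌉₊ + 1 with hm
  -- the key pointwise lower bound on the tail
  have key : ∀ k : ℕ, c / ((k : ℝ) + m + 1) ≤ ((k + m : ℕ) : ℝ) ^ n * p (k + m) := by
    intro k
    set y : ℕ := k + m with hy
    have hy1 : 1 ≤ y := by omega
    have hyθ : θ ≤ (y : ℝ) := by
      calc θ ≤ (⌈θ⌉₊ : ℝ) := Nat.le_ceil θ
        _ ≤ (y : ℝ) := by
            have : ⌈θ⌉₊ ≤ y := by omega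
            exact_mod_cast this
    have hypos : (0 : ℝ) < y := by
      have : (1 : ℕ) ≤ y := hy1
      exact_mod_cast Nat.lt_of_lt_of_le Nat.zero_lt_one this
    have hy1R : (1 : ℝ) ≤ (y : ℝ) := by exact_mod_cast hy1
    have hyp1 : (0 : ℝ) < (y : ℝ) + 1 := by linarith
    rw [htail y hyθ]
    have hd1 : (θ / (y : ℝ)) ^ α = θ ^ α / (y : ℝ) ^ α :=
      Real.div_rpow hθ.le (le_of_lt hypos) α
    have hd2 : (θ / ((y : ℝ) + 1)) ^ α = θ ^ α / ((y : ℝ) + 1) ^ α :=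
      Real.div_rpow hθ.le hyp1.le α
    rw [hd1, hd2]
    -- bound (y:ℝ)^n from below by (y:ℝ)^α (as rpow)
    have hpow : (y : ℝ) ^ α ≤ (y : ℝ) ^ n := by
      rw [← Real.rpow_natCast (y : ℝ) n]
      exact Real.rpow_le_rpow_of_exponent_le hy1R hαn
    -- Bernoulli: (y/(y+1))^α ≤ 1 - min α 1 / (y+1)
    have hb : ((y : ℝ) / ((y : ℝ) + 1)) ^ α ≤ 1 - min α 1 / ((y : ℝ) + 1) := by
      rcases le_total α 1 with h1 | h1
      · have hs : -1 ≤ -(1 / ((y : ℝ) + 1)) := by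
          rw [neg_le_neg_iff]
          rw [div_le_one hyp1]; linarith
        have := rpow_one_add_le_one_add_mul_self hs hα.le h1
        have heq : (1 : ℝ) + -(1 / ((y : ℝ) + 1)) = (y : ℝ) / ((y : ℝ) + 1) := by
          field_simp
          ring
        rw [heq] at this
        rw [min_eq_left h1]
        calc ((y : ℝ) / ((y : ℝ) + 1)) ^ α ≤ 1 + α * -(1 / ((y : ℝ) + 1)) := this
          _ = 1 - α / ((y : ℝ) + 1) := by ring
      · have hb0 : (0 : ℝ) < (y : ℝ) / ((y : ℝ) + 1) := div_pos hypos hyp1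
        have hb1 : (y : ℝ) / ((y : ℝ) + 1) ≤ 1 := by
          rw [div_le_one hyp1]; linarith
        have := Real.rpow_le_rpow_of_exponent_ge hb0 hb1 h1
        rw [Real.rpow_one] at this
        rw [min_eq_right h1]
        calc ((y : ℝ) / ((y : ℝ) + 1)) ^ α ≤ (y : ℝ) / ((y : ℝ) + 1) := this
          _ = 1 - 1 / ((y : ℝ) + 1) := by field_simp; ring
    -- combine
    have hyα : (0 : ℝ) < (y : ℝ) ^ α := Real.rpow_pos_of_pos hypos α
    have hy1α : (0 : ℝ) < ((y : ℝ) + 1) ^ α := Real.rpow_pos_of_pos hyp1 α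
    have hdiffnn : 0 ≤ θ ^ α / (y : ℝ) ^ α - θ ^ α / ((y : ℝ) + 1) ^ α := by
      have : (y : ℝ) ^ α ≤ ((y : ℝ) + 1) ^ α :=
        Real.rpow_le_rpow hypos.le (by linarith) hα.le
      have := div_le_div_of_nonneg_left (Real.rpow_pos_of_pos hθ α).le hyα this
      linarith
    have step1 : (y : ℝ) ^ α * (θ ^ α / (y : ℝ) ^ α - θ ^ α / ((y : ℝ) + 1) ^ α)
        ≤ (y : ℝ) ^ n * (θ ^ α / (y : ℝ) ^ α - θ ^ α / ((y : ℝ) + 1) ^ α) :=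
      mul_le_mul_of_nonneg_right hpow hdiffnn
    have step2 : (y : ℝ) ^ α * (θ ^ α / (y : ℝ) ^ α - θ ^ α / ((y : ℝ) + 1) ^ α)
        = θ ^ α * (1 - ((y : ℝ) / ((y : ℝ) + 1)) ^ α) := by
      have hdivα : ((y : ℝ) / ((y : ℝ) + 1)) ^ α = (y : ℝ) ^ α / ((y : ℝ) + 1) ^ α :=
        Real.div_rpow hypos.le hyp1.le α
      rw [hdivα]
      field_simp
    have step3 : θ ^ α * (min α 1 / ((y : ℝ) + 1))
        ≤ θ ^ α * (1 - ((y : ℝ) / ((y : ℝ) + 1)) ^ α) := by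
      apply mul_le_mul_of_nonneg_left _ (Real.rpow_pos_of_pos hθ α).le
      linarith
    have hkm : ((y : ℝ) + 1) = (k : ℝ) + m + 1 := by
      rw [hy]; push_cast; ring
    have final : c / ((k : ℝ) + m + 1)
        ≤ C * ((y : ℝ) ^ n * (θ ^ α / (y : ℝ) ^ α - θ ^ α / ((y : ℝ) + 1) ^ α)) := by
      rw [← hkm, hc]
      calc C * θ ^ α * min α 1 / ((y : ℝ) + 1)
          = C * (θ ^ α * (min α 1 / ((y : ℝ) + 1))) := by ring
        _ ≤ C * (θ ^ α * (1 - ((y : ℝ) / ((y : ℝ) + 1)) ^ α)) :=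
            mul_le_mul_of_nonneg_left step3 hCpos.le
        _ = C * ((y : ℝ) ^ α * (θ ^ α / (y : ℝ) ^ α - θ ^ α / ((y : ℝ) + 1) ^ α)) := by
            rw [step2]
        _ ≤ C * ((y : ℝ) ^ n * (θ ^ α / (y : ℝ) ^ α - θ ^ α / ((y : ℝ) + 1) ^ α)) :=
            mul_le_mul_of_nonneg_left step1 hCpos.le
    exact final.trans_eq (by ring)
  -- derive summability of the shifted harmonic-type series
  have htails : Summable (fun k : ℕ => ((k + m : ℕ) : ℝ) ^ n * p (k + m)) :=
    ((summable_nat_add_iff (f := fun y : ℕ => (y : ℝ) ^ n * p y) m).2 hsum)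
  have hharm : Summable (fun k : ℕ => c / ((k : ℝ) + m + 1)) := by
    apply Summable.of_nonneg_of_le (fun k => by positivity) key htails
  have hharm2 : Summable (fun k : ℕ => 1 / ((k : ℝ) + m + 1)) := by
    have := hharm.mul_left (1 / c)
    convert this using 2 with k
    · rfl
    · rw [← mul_div_assoc, one_div_mul_cancel hcpos.ne']
  have hharm3 : Summable (fun k : ℕ => 1 / (((k + (m + 1) : ℕ)) : ℝ)) := by
    have he : (fun k : ℕ => 1 / (((k + (m + 1) : ℕ)) : ℝ))
        = fun k : ℕ => 1 / ((k : ℝ) + m + 1) := by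
      funext k; push_cast; ring_nf
    rw [he]; exact hharm2
  have := (summable_nat_add_iff (f := fun n : ℕ => 1 / (n : ℝ)) (m + 1)).1 hharm3
  exact Real.not_summable_one_div_natCast this
end

section
/- Suppose Y is a discrete random variable with θ ≤ 1, so P(Y=0) = [1 + φ(1−θ^α)]/(1+φ) and P(Y=y) = φ[(θ/y)^α − (θ/(y+1))^α]/(1+φ) for positive integers y, with φ > 0, 0 < θ ≤ 1, α > 1. Then E(Y) = (φ θ^α/(1+φ)) ζ(α), where ζ is the Riemann zeta function. -/
open Filter Topology

/-- With θ ≤ 1 and α > 1, the mean of the weighted discrete composite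
distribution with Pareto tail equals (φθ^α/(1+φ)) ζ(α). -/
theorem mean_eq_zeta
    (φ θ α : ℝ) (hφ : 0 < φ) (hθ0 : 0 < θ) (hθ : θ ≤ 1) (hα : 1 < α)
    (p : ℕ → ℝ)
    (h0 : p 0 = (1 + φ * (1 - θ ^ α)) / (1 + φ))
    (hy : ∀ y : ℕ, 1 ≤ y →
      p y = φ * ((θ / y) ^ α - (θ / ((y : ℝ) + 1)) ^ α) / (1 + φ)) :
    ((∑' y : ℕ, (y : ℝ) * p y : ℝ) : ℂ)
      = ((φ * θ ^ α / (1 + φ) : ℝ) : ℂ) * riemannZeta (α : ℂ) := by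
  have hφ1 : (0:ℝ) < 1 + φ := by linarith
  have hne : (1 + φ) ≠ 0 := hφ1.ne'
  set c : ℝ := φ / (1 + φ) with hc
  set a : ℕ → ℝ := fun n => (θ / n) ^ α with ha
  set b : ℕ → ℝ := fun n => (n : ℝ) * a n with hb
  have ha0 : a 0 = 0 := by
    simp only [ha, Nat.cast_zero, div_zero]
    exact Real.zero_rpow (by positivity)
  have hb0 : b 0 = 0 := by simp [hb, ha0]
  -- the summand
  have hf : ∀ n : ℕ, (n : ℝ) * p n = c * (b n - b (n + 1)) + c * a (n + 1) := by
    intro n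
    rcases Nat.eq_zero_or_pos n with h | h
    · subst h
      simp only [Nat.cast_zero, zero_mul, hb, ha0, Nat.cast_one, zero_add]
      ring
    · rw [hy n h, hc]
      simp only [hb, ha]
      push_cast
      field_simp
      ring
  -- a at successors: θ^α / (n+1)^α
  have haS : ∀ n : ℕ, a (n + 1) = θ ^ α * (1 / ((n : ℝ) + 1) ^ α) := by
    intro n
    simp only [ha]
    push_cast
    rw [Real.div_rpow hθ0.le (by positivity)]
    ring
  -- monotonicity: a (n+1) ≤ a n for n ≥ 1
  have hmono : ∀ n : ℕ, 1 ≤ n → a (n + 1) ≤ a n := by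
    intro n hn
    have hn' : (1:ℝ) ≤ (n:ℝ) := by exact_mod_cast hn
    simp only [ha]
    push_cast
    refine Real.rpow_le_rpow (by positivity) ?_ (by linarith)
    gcongr <;> linarith
  -- nonneg of summand
  have hnn : ∀ n : ℕ, 0 ≤ (n : ℝ) * p n := by
    intro n
    rcases Nat.eq_zero_or_pos n with h | h
    · subst h; simp
    · rw [hy n h]
      have h1 : (0:ℝ) ≤ (θ / n) ^ α - (θ / ((n:ℝ) + 1)) ^ α := by
        have h2 := hmono n h
        simp only [ha] at h2
        push_cast at h2
        linarith
      positivity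
  -- summability of shifted series
  have hT : Summable (fun n : ℕ => 1 / ((n : ℝ) + 1) ^ α) := by
    have h1 : Summable (fun n : ℕ => 1 / (n : ℝ) ^ α) :=
      Real.summable_one_div_nat_rpow.mpr hα
    exact ((summable_nat_add_iff 1).mpr h1).congr (fun n => by push_cast; ring)
  set T : ℝ := ∑' n : ℕ, 1 / ((n : ℝ) + 1) ^ α with hTdef
  have hSsum : HasSum (fun n : ℕ => c * a (n + 1)) (c * (θ ^ α * T)) := by
    have h1 : HasSum (fun n : ℕ => 1 / ((n : ℝ) + 1) ^ α) T := hT.hasSum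
    exact ((h1.mul_left (θ ^ α)).mul_left c).congr_fun fun n => by rw [haS n]
  -- b tends to 0
  have hbt : Tendsto b atTop (𝓝 0) := by
    have key : Tendsto (fun x : ℝ => x ^ (-(α - 1))) atTop (𝓝 0) :=
      tendsto_rpow_neg_atTop (by linarith)
    have h2 : Tendsto (fun n : ℕ => θ ^ α * ((n : ℝ) ^ (-(α - 1)))) atTop (𝓝 (θ ^ α * 0)) :=
      (key.comp tendsto_natCast_atTop_atTop).const_mul _
    rw [mul_zero] at h2
    refine h2.congr' ?_
    filter_upwards [eventually_ge_atTop 1] with n hn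
    have hnpos : (0:ℝ) < (n : ℝ) := by exact_mod_cast hn
    simp only [hb, ha]
    rw [Real.div_rpow hθ0.le hnpos.le, neg_sub, Real.rpow_sub hnpos, Real.rpow_one]
    ring
  -- main HasSum
  have hmain : HasSum (fun n : ℕ => (n : ℝ) * p n) (c * (θ ^ α * T)) := by
    rw [hasSum_iff_tendsto_nat_of_nonneg hnn]
    have hps : ∀ N : ℕ, ∑ i ∈ Finset.range N, (i : ℝ) * p i
        = c * (b 0 - b N) + ∑ i ∈ Finset.range N, c * a (i + 1) := by
      intro N
      rw [← Finset.sum_range_sub' b N, Finset.mul_sum, ← Finset.sum_add_distrib]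
      exact Finset.sum_congr rfl fun i _ => hf i
    simp only [hps]
    have h1 : Tendsto (fun N : ℕ => c * (b 0 - b N)) atTop (𝓝 (c * (b 0 - 0))) :=
      ((tendsto_const_nhds (x := b 0)).sub hbt).const_mul c
    rw [hb0, sub_zero, mul_zero] at h1
    have h3 := h1.add hSsum.tendsto_sum_nat
    rw [zero_add] at h3
    exact h3.congr fun N => by rw [hb0]
  rw [hmain.tsum_eq]
  -- zeta side
  rw [zeta_eq_tsum_one_div_nat_add_one_cpow (by simpa using hα)]
  have hzeta : (∑' n : ℕ, 1 / ((n : ℂ) + 1) ^ (α : ℂ)) = (T : ℂ) := by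
    rw [hTdef, Complex.ofReal_tsum]
    refine tsum_congr fun n => ?_
    rw [Complex.ofReal_div, Complex.ofReal_one, Complex.ofReal_cpow (by positivity)]
    push_cast
    ring
  rw [hzeta, hc]
  push_cast
  ring
end

section
/- With θ ≤ 1, φ > 0 and α = 2, the mean of the weighted discrete composite distribution with Pareto tail equals π² φ θ² / (6(1+φ)). -/
open Filter

/-- With θ ≤ 1, φ > 0 and α = 2, the mean equals π² φ θ² / (6(1+φ)). -/
theorem mean_alpha_two
    (φ θ : ℝ) (hφ : 0 < φ) (hθ0 : 0 < θ) (hθ : θ ≤ 1)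
    (p : ℕ → ℝ)
    (h0 : p 0 = (1 + φ * (1 - θ ^ 2)) / (1 + φ))
    (hy : ∀ y : ℕ, 1 ≤ y →
      p y = φ * ((θ / y) ^ 2 - (θ / ((y : ℝ) + 1)) ^ 2) / (1 + φ)) :
    (∑' y : ℕ, (y : ℝ) * p y) = Real.pi ^ 2 * φ * θ ^ 2 / (6 * (1 + φ)) := by
  have h1φ : (0:ℝ) < 1 + φ := by linarith
  set C := φ * θ ^ 2 / (1 + φ) with hC
  -- telescoping sum
  have htel : HasSum (fun n : ℕ => 1/((n:ℝ)+1) - 1/((n:ℝ)+2)) 1 := by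
    have hnn : ∀ n : ℕ, 0 ≤ 1/((n:ℝ)+1) - 1/((n:ℝ)+2) := by
      intro n
      have h1 : (0:ℝ) < (n:ℝ)+1 := by positivity
      have h2 : ((n:ℝ)+1) ≤ (n:ℝ)+2 := by linarith
      have := one_div_le_one_div_of_le h1 h2
      linarith
    rw [hasSum_iff_tendsto_nat_of_nonneg hnn]
    have key : ∀ N : ℕ, ∑ n ∈ Finset.range N, (1/((n:ℝ)+1) - 1/((n:ℝ)+2))
        = 1 - 1/((N:ℝ)+1) := by
      intro N; induction N with
      | zero => simp
      | succ N ih =>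
        rw [Finset.sum_range_succ, ih]
        have h1 : ((N:ℝ)+1) ≠ 0 := by positivity
        have h2 : ((N:ℝ)+2) ≠ 0 := by positivity
        push_cast
        field_simp
        ring
    simp_rw [key]
    have h := tendsto_one_div_add_atTop_nhds_zero_nat (𝕜 := ℝ)
    simpa using h.const_sub 1
  -- shifted Basel sum
  have hs2 : HasSum (fun n : ℕ => 1/((n:ℝ)+2)^2) (Real.pi^2/6 - 1) := by
    have h := (hasSum_nat_add_iff' (f := fun n : ℕ => (1:ℝ)/(n:ℝ)^2) 2).mpr hasSum_zeta_two
    simp only [Finset.sum_range_succ, Finset.sum_range_zero] at h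
    norm_num at h
    convert h using 2 with n
    case e'_3 => rfl
    push_cast
    ring
  have hsum1 : HasSum (fun n : ℕ =>
      (1/((n:ℝ)+1) - 1/((n:ℝ)+2)) + 1/((n:ℝ)+2)^2) (Real.pi^2/6) := by
    convert htel.add hs2 using 1
    ring
  have heq : (fun n : ℕ => C * ((1/((n:ℝ)+1) - 1/((n:ℝ)+2)) + 1/((n:ℝ)+2)^2))
      = fun n : ℕ => ((n:ℝ)+1) * p (n+1) := by
    funext n
    rw [hy (n+1) (by omega)]
    have h1 : ((n:ℝ)+1) ≠ 0 := by positivity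
    have h2 : ((n:ℝ)+2) ≠ 0 := by positivity
    have h3 : (1:ℝ) + φ ≠ 0 := ne_of_gt h1φ
    push_cast
    rw [hC]
    field_simp
    ring
  have hf : HasSum (fun n : ℕ => ((n:ℝ)+1) * p (n+1)) (C * (Real.pi^2/6)) :=
    heq ▸ (hsum1.mul_left C)
  have hg : HasSum (fun y : ℕ => (y:ℝ) * p y) (C * (Real.pi^2/6)) := by
    rw [← hasSum_nat_add_iff' (f := fun y : ℕ => (y:ℝ) * p y) 1]
    simp only [Finset.sum_range_one, Nat.cast_zero, zero_mul, sub_zero]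
    convert hf using 2 with n
    case e'_3 => rfl
    push_cast
    ring
  rw [hg.tsum_eq, hC]
  have h3 : (1:ℝ) + φ ≠ 0 := ne_of_gt h1φ
  field_simp
end
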